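/- Let h : ℝ → ℝ be a bounded continuous function, let μ ∈ ℝ be fixed, and define G(v) = ∫ h(x) dN(μ, v)(x) for v > 0, where N(μ, v) is the Gaussian measure on ℝ with mean μ and variance v. Then for every v > 0, G is differentiable at v with G′(v) = ∫ h(x) · ( (x − μ)² − v ) / (2 v²) dN(μ, v)(x). -/

import Mathlib

open MeasureTheory ProbabilityTheory Real
open scoped NNReal ENNReal

namespace Stmt17Aux

noncomputable def q (μ w x : ℝ) : ℝ :=
  (Real.sqrt (2 * π * w))⁻¹ * Real.exp (-(x - μ) ^ 2 / (2 * w))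

lemma q_eq_pdf (μ : ℝ) {w : ℝ} (hw : 0 < w) (x : ℝ) :
    q μ w x = gaussianPDFReal μ w.toNNReal x := by
  rw [q, gaussianPDFReal, Real.coe_toNNReal _ hw.le]

lemma q_nonneg (μ w x : ℝ) : 0 ≤ q μ w x := by
  unfold q; positivity

lemma q_cont (μ w : ℝ) : Continuous (q μ w) := by
  unfold q; fun_prop

lemma integrable_q (μ : ℝ) {w : ℝ} (hw : 0 < w) : Integrable (q μ w) :=
  (integrable_gaussianPDFReal μ w.toNNReal).congr
    (Filter.Eventually.of_forall fun x => (q_eq_pdf μ hw x).symm)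

lemma hasDerivAt_q (μ x : ℝ) {w : ℝ} (hw : 0 < w) :
    HasDerivAt (fun w => q μ w x)
      (q μ w x * (((x - μ) ^ 2 - w) / (2 * w ^ 2))) w := by
  have hπ := Real.pi_pos
  have h2πw : 0 < 2 * π * w := by positivity
  have hs0 : 0 < Real.sqrt (2 * π * w) := Real.sqrt_pos.mpr h2πw
  have hs2 : Real.sqrt (2 * π * w) ^ 2 = 2 * π * w := Real.sq_sqrt h2πw.le
  have h1 : HasDerivAt (fun w : ℝ => Real.sqrt (2 * π * w))
      (2 * π / (2 * Real.sqrt (2 * π * w))) w := by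
    have hinner : HasDerivAt (fun w : ℝ => 2 * π * w) (2 * π) w := by
      simpa using (hasDerivAt_id w).const_mul (2 * π)
    have := (Real.hasDerivAt_sqrt h2πw.ne').comp w hinner
    refine this.congr_deriv ?_
    ring
  have h1' : HasDerivAt (fun w : ℝ => (Real.sqrt (2 * π * w))⁻¹)
      (-(2 * π / (2 * Real.sqrt (2 * π * w))) / Real.sqrt (2 * π * w) ^ 2) w :=
    h1.inv hs0.ne'
  have hinner2 : HasDerivAt (fun w : ℝ => -(x - μ) ^ 2 / (2 * w))
      ((x - μ) ^ 2 / (2 * w ^ 2)) w := by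
    have hfun : (fun w : ℝ => -(x - μ) ^ 2 / (2 * w))
        = fun w : ℝ => (-(x - μ) ^ 2 / 2) * w⁻¹ := by
      funext u; ring
    have h := (hasDerivAt_inv hw.ne').const_mul (-(x - μ) ^ 2 / 2)
    rw [hfun]
    refine h.congr_deriv ?_
    ring
  have h2 : HasDerivAt (fun w : ℝ => Real.exp (-(x - μ) ^ 2 / (2 * w)))
      (Real.exp (-(x - μ) ^ 2 / (2 * w)) * ((x - μ) ^ 2 / (2 * w ^ 2))) w :=
    hinner2.exp
  have hmul := h1'.mul h2
  refine hmul.congr_deriv ?_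
  rw [q, hs2]
  field_simp
  ring

lemma integral_gaussian_eq (g : ℝ → ℝ) (μ : ℝ) {w : ℝ} (hw : 0 < w) :
    ∫ x, g x ∂(gaussianReal μ w.toNNReal) = ∫ x, q μ w x * g x := by
  have hw' : w.toNNReal ≠ 0 := by
    simp [Real.toNNReal_eq_zero, not_le, hw]
  rw [gaussianReal_of_var_ne_zero _ hw']
  have hpdf : gaussianPDF μ w.toNNReal
      = fun x => (((gaussianPDFReal μ w.toNNReal x).toNNReal : ℝ≥0) : ℝ≥0∞) := rfl
  rw [hpdf, integral_withDensity_eq_integral_smul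
    ((measurable_gaussianPDFReal μ w.toNNReal).real_toNNReal) g]
  congr 1; funext x
  rw [NNReal.smul_def, smul_eq_mul, Real.coe_toNNReal _ (gaussianPDFReal_nonneg _ _ _),
    q_eq_pdf μ hw]

end Stmt17Aux

open Stmt17Aux

/-- differentiability of the variance map `v ↦ ∫ h dN(μ, v)`
for bounded continuous `h`, with derivative given by the score-function
identity with respect to the variance. -/
theorem stmt_17 (h : ℝ → ℝ) (hc : Continuous h) (hb : ∃ C, ∀ x, |h x| ≤ C)
    (μ : ℝ) (v : ℝ) (hv : 0 < v) :
    HasDerivAt (fun v : ℝ => ∫ x, h x ∂(gaussianReal μ (Real.toNNReal v)))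
      (∫ x, h x * (((x - μ) ^ 2 - v) / (2 * v ^ 2))
        ∂(gaussianReal μ (Real.toNNReal v))) v := by
  obtain ⟨C, hC⟩ := hb
  have hC0 : 0 ≤ C := le_trans (abs_nonneg _) (hC 0)
  have hπ := Real.pi_pos
  set F : ℝ → ℝ → ℝ := fun w x => q μ w x * h x with hF
  set F' : ℝ → ℝ → ℝ := fun w x =>
    q μ w x * (((x - μ) ^ 2 - w) / (2 * w ^ 2)) * h x with hF'
  set bound : ℝ → ℝ := fun x =>
    C * ((Real.sqrt (π * v))⁻¹ * Real.exp (-(1 / (3 * v)) * (x - μ) ^ 2)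
      * (((x - μ) ^ 2 + 2 * v) * 2 / v ^ 2)) with hbound_def
  have hmeas : ∀ᶠ w in nhds v, AEStronglyMeasurable (F w) volume :=
    Filter.Eventually.of_forall fun w => ((q_cont μ w).mul hc).aestronglyMeasurable
  have hint : Integrable (F v) volume := by
    have : Integrable (fun x => h x * q μ v x) volume :=
      (integrable_q μ hv).bdd_mul hc.aestronglyMeasurable
        (Filter.Eventually.of_forall fun x => by simpa [Real.norm_eq_abs] using hC x)
    exact this.congr (Filter.Eventually.of_forall fun x => mul_comm _ _)
  have hmeas' : AEStronglyMeasurable (F' v) volume := by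
    refine Continuous.aestronglyMeasurable ?_
    exact ((q_cont μ v).mul (by fun_prop)).mul hc
  have hball : ∀ w ∈ Metric.ball v (v / 2), v / 2 < w ∧ w < 3 * v / 2 := by
    intro w hw
    rw [Metric.mem_ball, Real.dist_eq, abs_sub_lt_iff] at hw
    constructor <;> linarith [hw.1, hw.2]
  have hbound : ∀ᵐ x ∂(volume : Measure ℝ), ∀ w ∈ Metric.ball v (v / 2),
      ‖F' w x‖ ≤ bound x := by
    refine Filter.Eventually.of_forall fun x w hw => ?_
    obtain ⟨hw1, hw2⟩ := hball w hw
    have hw0 : 0 < w := lt_trans (by positivity) hw1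
    have hc0 : (0:ℝ) ≤ (x - μ) ^ 2 := sq_nonneg _
    have hA : (Real.sqrt (2 * π * w))⁻¹ ≤ (Real.sqrt (π * v))⁻¹ := by
      have h1 : (0:ℝ) < Real.sqrt (π * v) := Real.sqrt_pos.mpr (by positivity)
      have h2 : Real.sqrt (π * v) ≤ Real.sqrt (2 * π * w) :=
        Real.sqrt_le_sqrt (by nlinarith)
      exact inv_anti₀ h1 h2
    have hB : Real.exp (-(x - μ) ^ 2 / (2 * w))
        ≤ Real.exp (-(1 / (3 * v)) * (x - μ) ^ 2) := by
      apply Real.exp_le_exp.mpr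
      have h1 : -(1 / (3 * v)) * (x - μ) ^ 2 = -((x - μ) ^ 2 / (3 * v)) := by ring
      rw [h1, neg_div, neg_le_neg_iff]
      exact div_le_div_of_nonneg_left hc0 (by positivity) (by linarith)
    have hD : |((x - μ) ^ 2 - w) / (2 * w ^ 2)|
        ≤ ((x - μ) ^ 2 + 2 * v) * 2 / v ^ 2 := by
      rw [abs_div, abs_of_pos (by positivity : (0:ℝ) < 2 * w ^ 2)]
      rw [div_le_div_iff₀ (by positivity) (by positivity)]
      have habs : |(x - μ) ^ 2 - w| ≤ (x - μ) ^ 2 + 2 * v := by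
        rw [abs_sub_le_iff]
        constructor <;> nlinarith
      have hv2 : v ^ 2 ≤ 4 * w ^ 2 := by nlinarith
      nlinarith [mul_le_mul_of_nonneg_right habs (sq_nonneg v),
        mul_le_mul_of_nonneg_left hv2 (show (0:ℝ) ≤ (x - μ) ^ 2 + 2 * v by positivity)]
    have hq_le : q μ w x ≤ (Real.sqrt (π * v))⁻¹
        * Real.exp (-(1 / (3 * v)) * (x - μ) ^ 2) := by
      rw [q]
      have he : (0:ℝ) < Real.exp (-(x - μ) ^ 2 / (2 * w)) := Real.exp_pos _
      exact mul_le_mul hA hB he.le (by positivity)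
    have hnorm : ‖F' w x‖ = q μ w x * |((x - μ) ^ 2 - w) / (2 * w ^ 2)| * |h x| := by
      rw [hF']
      simp only [Real.norm_eq_abs, abs_mul, abs_of_nonneg (q_nonneg μ w x)]
    rw [hnorm, hbound_def]
    calc q μ w x * |((x - μ) ^ 2 - w) / (2 * w ^ 2)| * |h x|
        ≤ ((Real.sqrt (π * v))⁻¹ * Real.exp (-(1 / (3 * v)) * (x - μ) ^ 2))
          * (((x - μ) ^ 2 + 2 * v) * 2 / v ^ 2) * C := by
          exact mul_le_mul (mul_le_mul hq_le hD (abs_nonneg _) (by positivity))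
            (hC x) (abs_nonneg _) (by positivity)
      _ = C * ((Real.sqrt (π * v))⁻¹ * Real.exp (-(1 / (3 * v)) * (x - μ) ^ 2)
          * (((x - μ) ^ 2 + 2 * v) * 2 / v ^ 2)) := by ring
  have hbound_int : Integrable bound volume := by
    have hb3 : (0:ℝ) < 1 / (3 * v) := by positivity
    have h1 : Integrable (fun y : ℝ => y ^ 2 * Real.exp (-(1 / (3 * v)) * y ^ 2)) volume := by
      have := integrable_rpow_mul_exp_neg_mul_sq hb3 (s := 2) (by norm_num)
      refine this.congr (Filter.Eventually.of_forall fun y => ?_)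
      norm_num [Real.rpow_two]
    have h2 : Integrable (fun y : ℝ => Real.exp (-(1 / (3 * v)) * y ^ 2)) volume :=
      integrable_exp_neg_mul_sq hb3
    have h3 : Integrable (fun y : ℝ =>
        (y ^ 2 + 2 * v) * Real.exp (-(1 / (3 * v)) * y ^ 2)) volume := by
      simpa [add_mul, Pi.add_def] using h1.add (h2.const_mul (2 * v))
    have h4 : Integrable (fun x : ℝ =>
        ((x - μ) ^ 2 + 2 * v) * Real.exp (-(1 / (3 * v)) * (x - μ) ^ 2)) volume :=
      h3.comp_sub_right μ
    have h5 := h4.const_mul (C * (Real.sqrt (π * v))⁻¹ * 2 / v ^ 2)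
    refine h5.congr (Filter.Eventually.of_forall fun x => ?_)
    rw [hbound_def]
    ring
  have hdiff : ∀ᵐ x ∂(volume : Measure ℝ), ∀ w ∈ Metric.ball v (v / 2),
      HasDerivAt (F · x) (F' w x) w := by
    refine Filter.Eventually.of_forall fun x w hw => ?_
    have hw0 : 0 < w := lt_trans (by positivity) (hball w hw).1
    exact (hasDerivAt_q μ x hw0).mul_const (h x)
  have key := hasDerivAt_integral_of_dominated_loc_of_deriv_le
    (Metric.ball_mem_nhds v (show (0:ℝ) < v / 2 by positivity)) hmeas hint hmeas' hbound hbound_int hdiff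
  have heq : (fun w : ℝ => ∫ x, h x ∂(gaussianReal μ (Real.toNNReal w)))
      =ᶠ[nhds v] fun w => ∫ x, F w x := by
    filter_upwards [eventually_gt_nhds hv] with w hw
    rw [integral_gaussian_eq h μ hw]
  have hderiv_eq : (∫ x, F' v x) = ∫ x, h x * (((x - μ) ^ 2 - v) / (2 * v ^ 2))
      ∂(gaussianReal μ (Real.toNNReal v)) := by
    rw [integral_gaussian_eq _ μ hv]
    congr 1; funext x
    rw [hF']; ring
  exact (hderiv_eq ▸ key.2).congr_of_eventuallyEq heq
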